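/- Let Σ be a finite alphabet with |Σ| = σ ≥ 2, let k be a natural number, and let w be a word over Σ with alph(w) = Σ and k > ι(w). Then the following are equivalent: (1) for all words w' over Σ with ι(w') = ι(w), |ScatFact_k(w')| ≤ |ScatFact_k(w)|; (2) there exists exactly one letter a ∈ Σ such that ScatFact_k(w) = { v ∈ Σ^k : m(w)·a ∉ ScatFact_{ι(w)+1}(v) }. -/

import Mathlib

open List

universe u
variable {α : Type u}

/-- `ScatFact k w` is the set of scattered factors (subsequences) of `w` of length exactly `k`. -/
def ScatFact (k : ℕ) (w : List α) : Set (List α) :=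
  {v | v.length = k ∧ v.Sublist w}

/-- `w` is `k`-universal over the alphabet `S`: every word of length `k` over `S`
is a scattered factor of `w`. -/
def IsKUniversal [DecidableEq α] (S : Finset α) (k : ℕ) (w : List α) : Prop :=
  ∀ v : List α, v.length = k → (∀ x ∈ v, x ∈ S) → v.Sublist w

/-- The universality index of `w` over the alphabet `S`: the largest `k` such that
`w` is `k`-universal over `S`. -/
noncomputable def univIdx [DecidableEq α] (S : Finset α) (w : List α) : ℕ :=
  sSup {k | IsKUniversal S k w}

/-- `IsArchFact S w inners modus rest` says that `w` has the arch factorization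
`w = ar_1 ⋯ ar_n · rest` over the alphabet `S`, where the `i`-th arch is
`ar_i = inners[i] ++ [modus[i]]`: each arch contains every letter of `S`,
the last letter of each arch occurs only once within the arch, and the
alphabet of the rest is a proper subset of `S`. -/
def IsArchFact [DecidableEq α] (S : Finset α) (w : List α)
    (inners : List (List α)) (modus : List α) (rest : List α) : Prop :=
  inners.length = modus.length ∧
  w = (List.zipWith (fun inn m => inn ++ [m]) inners modus).flatten ++ rest ∧
  (∀ p ∈ List.zip inners modus, ∀ x ∈ S, x ∈ p.1 ++ [p.2]) ∧
  (∀ p ∈ List.zip inners modus, p.2 ∉ p.1) ∧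
  rest.toFinset ⊂ S

/-- `v` is perfect `k`-universal over `S`: `alph(v) = S`, the universality index of `v`
over `S` is `k`, and the rest of its arch factorization over `S` is empty. -/
def IsPerfectUniv [DecidableEq α] (S : Finset α) (k : ℕ) (v : List α) : Prop :=
  v.toFinset = S ∧ univIdx S v = k ∧ ∃ inners modus, IsArchFact S v inners modus []

/-- `v` is minimal perfect `k`-universal over `S`. -/
def IsMinPerfectUniv [DecidableEq α] (S : Finset α) (k : ℕ) (v : List α) : Prop :=
  IsPerfectUniv S k v ∧ ∀ v' : List α, IsPerfectUniv S k v' → v.length ≤ v'.length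

/-- `nextAlphPos w i s` (positions `1`-indexed): the least position `j` such that
`w[i+1..j]` contains exactly `s` distinct letters, or `none` (representing `-1`)
if `w[i+1..|w|]` contains fewer than `s` distinct letters. -/
noncomputable def nextAlphPos [DecidableEq α] (w : List α) (i s : ℕ) : Option ℕ :=
  if (w.drop i).toFinset.card < s then none
  else some (sInf {j | ((w.drop i).take (j - i)).toFinset.card = s})

/-- The letter of `w` at (1-indexed) position `j`. -/
def letterAt [Inhabited α] (w : List α) (j : ℕ) : α := w.getD (j - 1) default

/-- The word over `Fin σ` with `ι` arches, whose first arch is `a_1 a_2 ⋯ a_σ`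
and each later arch is the reverse of the previous one. -/
def wmin (σ ι : ℕ) : List (Fin σ) :=
  ((List.range ι).map (fun i =>
    if i % 2 = 0 then List.finRange σ else (List.finRange σ).reverse)).flatten

namespace SF2

open List

variable {β : Type*}

theorem L0 {a : β} {s l₁ l₂ : List β} (ha : a ∉ l₁) (h : a :: s <+ l₁ ++ l₂) :
    a :: s <+ l₂ := by
  induction l₁ with
  | nil => simpa using h
  | cons b t ih =>
    simp only [List.cons_append] at h
    cases h with
    | cons _ h' => exact ih (fun hm => ha (List.mem_cons_of_mem _ hm)) h'
    | cons_cons => exact absurd (List.mem_cons_self) ha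

theorem Lcons {c : β} {l s t : List β} (hc : c ∈ l) (h : s <+ t) : c :: s <+ l ++ t := by
  have h1 : [c] <+ l := List.singleton_sublist.2 hc
  simpa using h1.append h

theorem Lchunks {B s : List β} (hB : ∀ x ∈ s, x ∈ B) : ∀ {j : ℕ}, s.length ≤ j →
    s <+ (List.replicate j B).flatten := by
  induction s with
  | nil => intro j _; exact List.nil_sublist _
  | cons c s ih =>
    intro j hj
    cases j with
    | zero => simp at hj
    | succ j =>
      rw [List.replicate_succ, List.flatten_cons]
      exact Lcons (hB c (List.mem_cons_self))
        (ih (fun x hx => hB x (List.mem_cons_of_mem _ hx)) (Nat.le_of_succ_le_succ hj))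

theorem Lsplit {a : β} {v : List β} (h : a ∈ v) : ∃ s t, v = s ++ a :: t ∧ a ∉ s := by
  induction v with
  | nil => simp at h
  | cons c v' ih =>
    by_cases hca : c = a
    · exact ⟨[], v', by simp [hca], by simp⟩
    · have hav' : a ∈ v' := by
        rcases List.mem_cons.1 h with h1|h1
        · exact absurd h1.symm hca
        · exact h1
      obtain ⟨s, t, rfl, hs⟩ := ih hav'
      refine ⟨c :: s, t, by simp, ?_⟩
      simp only [List.mem_cons, not_or]
      exact ⟨fun h1 => hca h1.symm, hs⟩

theorem LPad {x b : β} {m t : List β} {n : ℕ} (hxb : x ≠ b)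
    (h : m ++ [x] <+ t ++ List.replicate n b) : m ++ [x] <+ t := by
  have h1 : x :: m.reverse <+ List.replicate n b ++ t.reverse := by
    have := h.reverse
    simpa using this
  have h2 : x :: m.reverse <+ t.reverse := L0 (by simp [List.mem_replicate, hxb]) h1
  have := h2.reverse
  simpa using this

theorem Llast {a b : β} {m : List β} (hab : a ≠ b) : ¬ (m ++ [a] <+ m ++ [b]) := by
  intro h
  have h1 : a :: m.reverse <+ b :: m.reverse := by
    have := h.reverse
    simpa using this
  cases h1 with
  | cons _ h' => exact absurd h'.length_le (by simp)
  | cons_cons => exact hab rfl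

theorem cons_sublist_cons_iff_ne {c d : β} {u v : List β} (h : c ≠ d) :
    c :: u <+ d :: v ↔ c :: u <+ v := by
  constructor
  · intro hs
    cases hs with
    | cons _ h' => exact h'
    | cons_cons => exact absurd rfl h
  · intro hs; exact hs.trans (List.sublist_cons_self _ _)

theorem zipWith_replicate' (f : List β → β → List β) (a : List β) (b : β) :
    ∀ n : ℕ, List.zipWith f (List.replicate n a) (List.replicate n b)
      = List.replicate n (f a b) := by
  intro n
  induction n with
  | zero => simp
  | succ n ih => simp [List.replicate_succ, ih]

theorem L1' {inners : List (List β)} {modus : List β} {rest : List β}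
    (hlen : inners.length = modus.length)
    (hmod : ∀ p ∈ List.zip inners modus, p.2 ∉ p.1) :
    ∀ t : List β, modus ++ t <+
      (List.zipWith (fun inn m => inn ++ [m]) inners modus).flatten ++ rest → t <+ rest := by
  induction modus generalizing inners with
  | nil => intro t h; cases inners with
    | nil => simpa using h
    | cons i is => simp at hlen
  | cons m ms ih =>
    intro t h
    cases inners with
    | nil => simp at hlen
    | cons i is =>
      simp only [List.zipWith_cons_cons, List.flatten_cons, List.cons_append,
        List.append_assoc] at h
      have hmi : m ∉ i := hmod (i, m) (by simp)
      have h2 : m :: (ms ++ t) <+ [m] ++ ((List.zipWith (fun inn m => inn ++ [m]) is ms).flatten ++ rest) := by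
        apply L0 hmi
        simpa [List.append_assoc] using h
      have h3 : ms ++ t <+ (List.zipWith (fun inn m => inn ++ [m]) is ms).flatten ++ rest :=
        List.cons_sublist_cons.1 h2
      exact ih (by simpa using hlen) (fun p hp => hmod p (by simp [hp])) t h3

theorem L2' {inners : List (List β)} {modus : List β} [DecidableEq β] (S : Finset β)
    (hlen : inners.length = modus.length)
    (harch : ∀ p ∈ List.zip inners modus, ∀ x ∈ S, x ∈ p.1 ++ [p.2]) :
    ∀ v : List β, v.length = modus.length → (∀ x ∈ v, x ∈ S) →
      v <+ (List.zipWith (fun inn m => inn ++ [m]) inners modus).flatten := by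
  induction modus generalizing inners with
  | nil => intro v hv _; rw [List.length_nil, List.length_eq_zero_iff] at hv; subst hv
           exact List.nil_sublist _
  | cons m ms ih =>
    intro v hv hvS
    cases inners with
    | nil => simp at hlen
    | cons i is =>
      cases v with
      | nil => simp at hv
      | cons c v' =>
        simp only [List.zipWith_cons_cons, List.flatten_cons]
        have hc : c ∈ i ++ [m] := harch (i, m) (by simp) c (hvS c (by simp))
        exact Lcons hc (ih (by simpa using hlen)
          (fun p hp x hx => harch p (by simp [hp]) x hx)
          v' (by simpa using hv) (fun x hx => hvS x (List.mem_cons_of_mem _ hx)))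

theorem L3 {β : Type u_1} [DecidableEq β] [Fintype β] {w : List β} {inners : List (List β)}
    {modus rest : List β} (hfact : IsArchFact Finset.univ w inners modus rest) :
    univIdx Finset.univ w = modus.length := by
  obtain ⟨hlen, hw, harch, hmod, hrest⟩ := hfact
  obtain ⟨x, -, hx⟩ := Finset.exists_of_ssubset hrest
  have hxr : x ∉ rest := fun h => hx (List.mem_toFinset.2 h)
  have hset : {n | IsKUniversal Finset.univ n w} = Set.Iic modus.length := by
    ext n
    simp only [Set.mem_setOf_eq, Set.mem_Iic]
    constructor
    · intro hu
      by_contra hn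
      push_neg at hn
      have hbad : (modus ++ List.replicate (n - modus.length) x) <+ w :=
        hu _ (by simp [Nat.add_sub_cancel' (le_of_lt hn)]) (by simp)
      rw [hw] at hbad
      have := L1' hlen hmod _ hbad
      have hxmem : x ∈ List.replicate (n - modus.length) x := by
        simp [List.mem_replicate]; omega
      exact hxr (this.subset hxmem)
    · intro hn v hv _
      have h1 : v ++ List.replicate (modus.length - n) x <+ w := by
        rw [hw]
        refine (L2' Finset.univ hlen harch _ ?_ (by simp)).trans (List.sublist_append_left _ _)
        simp [hv]; omega
      exact ((List.sublist_append_left v _).trans h1)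
  rw [univIdx, hset, csSup_Iic]

variable {α : Type u_2} [DecidableEq α] [Fintype α]

def allLists (n : ℕ) : Finset (List α) :=
  match n with
  | 0 => {[]}
  | n+1 => Finset.univ.biUnion (fun c : α => (allLists n).image (c :: ·))

theorem mem_allLists : ∀ {n : ℕ} {v : List α}, v ∈ allLists n ↔ v.length = n := by
  intro n
  induction n with
  | zero => intro v; simp [allLists, List.length_eq_zero_iff]
  | succ n ih =>
    intro v
    simp only [allLists, Finset.mem_biUnion, Finset.mem_univ, true_and, Finset.mem_image]
    constructor
    · rintro ⟨c, v', hv', rfl⟩; simp [ih.1 hv']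
    · intro hv
      cases v with
      | nil => simp at hv
      | cons c v' => exact ⟨c, v', ih.2 (by simpa using hv), rfl⟩

noncomputable def supCount (n : ℕ) (u : List α) : ℕ :=
  ((allLists n).filter (u <+ ·)).card

theorem supCount_eq_of_length_eq : ∀ (n : ℕ) (u u' : List α),
    u.length = u'.length → supCount n u = supCount n u' := by
  intro n
  induction n with
  | zero =>
    intro u u' h
    unfold supCount
    cases u with
    | nil => cases u' with
      | nil => rfl
      | cons => simp at h
    | cons c t => cases u' with
      | nil => simp at h
      | cons c' t' =>
        simp [allLists, Finset.filter_singleton]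
  | succ n ih =>
    intro u u' h
    cases u with
    | nil =>
      cases u' with
      | nil => rfl
      | cons => simp at h
    | cons c u₁ =>
      cases u' with
      | nil => simp at h
      | cons c' u₁' =>
        have hlen : u₁.length = u₁'.length := by simpa using h
        have key : ∀ (c : α) (u₁ : List α),
            supCount (n+1) (c :: u₁) = supCount n u₁ + (Fintype.card α - 1) * supCount n (c :: u₁) := by
          intro c u₁
          unfold supCount
          have hdecomp : ((allLists (n+1)).filter ((c :: u₁) <+ ·)) =
              Finset.univ.biUnion (fun d : α =>
                ((allLists n).filter ((if d = c then u₁ else c :: u₁) <+ ·)).image (d :: ·)) := by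
            ext v
            simp only [Finset.mem_filter, Finset.mem_biUnion, Finset.mem_univ, true_and,
              Finset.mem_image, mem_allLists]
            constructor
            · rintro ⟨hv, hs⟩
              cases v with
              | nil => simp at hv
              | cons d v' =>
                refine ⟨d, v', ⟨by simpa using hv, ?_⟩, rfl⟩
                by_cases hdc : d = c
                · subst hdc
                  simp only [if_pos rfl]
                  exact List.cons_sublist_cons.1 hs
                · rw [if_neg hdc]
                  exact (cons_sublist_cons_iff_ne (fun hh => hdc hh.symm) ).1 hs
            · rintro ⟨d, v', ⟨hv', hs⟩, rfl⟩
              refine ⟨by simp [hv'], ?_⟩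
              by_cases hdc : d = c
              · subst hdc; rw [if_pos rfl] at hs; exact List.cons_sublist_cons.2 hs
              · rw [if_neg hdc] at hs
                exact (cons_sublist_cons_iff_ne (fun hh => hdc hh.symm)).2 hs
          rw [hdecomp, Finset.card_biUnion]
          · have : ∀ d : α, (((allLists n).filter ((if d = c then u₁ else c :: u₁) <+ ·)).image (d :: ·)).card
                = ((allLists n).filter ((if d = c then u₁ else c :: u₁) <+ ·)).card := by
              intro d
              apply Finset.card_image_of_injective
              intro a b hab; simpa using hab
            simp only [this]
            rw [← Finset.add_sum_erase _ _ (Finset.mem_univ c)]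
            simp only [if_pos rfl]
            congr 1
            rw [Finset.sum_congr rfl (fun d hd => by
              rw [if_neg (Finset.mem_erase.1 hd).1])]
            rw [Finset.sum_const, smul_eq_mul]
            congr 1
            simp [Finset.card_erase_of_mem]
          · intro d₁ _ d₂ _ hne
            apply Finset.disjoint_left.2
            rintro v hv1 hv2
            simp only [Finset.mem_image] at hv1 hv2
            obtain ⟨a, -, rfl⟩ := hv1
            obtain ⟨b, -, hb⟩ := hv2
            exact hne (by injection hb with h1 _; exact h1.symm ▸ rfl)
        rw [key c u₁, key c' u₁', ih u₁ u₁' hlen, ih (c :: u₁) (c' :: u₁') (by simpa using h)]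

noncomputable def CFin (n : ℕ) (u : List α) : Finset (List α) :=
  (allLists n).filter (fun v => ¬ u <+ v)

theorem card_CFin_eq_of_length_eq {n : ℕ} {u u' : List α} (h : u.length = u'.length) :
    (CFin n u).card = (CFin n u').card := by
  have h1 := Finset.card_filter_add_card_filter_not (s := allLists (α := α) n)
    (p := (u <+ ·))
  have h2 := Finset.card_filter_add_card_filter_not (s := allLists (α := α) n)
    (p := (u' <+ ·))
  have h3 : supCount n u = supCount n u' := supCount_eq_of_length_eq n u u' h
  unfold supCount at h3
  unfold CFin
  omega

section Wstar
variable (a0 : α) (k : ℕ)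

noncomputable def Bk : List α := (List.replicate k (Finset.univ.erase a0).toList).flatten

theorem mem_Bk {x : α} (hk : 1 ≤ k) (hx : x ≠ a0) : x ∈ Bk a0 k := by
  unfold Bk
  rw [List.mem_flatten]
  refine ⟨(Finset.univ.erase a0).toList, ?_, by simp [hx]⟩
  rw [List.mem_replicate]
  exact ⟨by omega, rfl⟩

theorem not_mem_Bk : a0 ∉ Bk a0 k := by
  unfold Bk
  rw [List.mem_flatten]
  rintro ⟨l, hl, hmem⟩
  rw [List.mem_replicate] at hl
  rw [hl.2] at hmem
  simp at hmem

noncomputable def Wstar (j : ℕ) : List α := (List.replicate j (Bk a0 k ++ [a0])).flatten ++ Bk a0 k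

theorem Wstar_succ (j : ℕ) : Wstar a0 k (j+1) = Bk a0 k ++ a0 :: Wstar a0 k j := by
  unfold Wstar
  rw [List.replicate_succ, List.flatten_cons]
  simp

theorem count_Wstar (j : ℕ) : (Wstar a0 k j).count a0 = j := by
  induction j with
  | zero =>
    unfold Wstar; simp
    exact List.count_eq_zero.2 (not_mem_Bk a0 k)
  | succ j ih =>
    rw [Wstar_succ, List.count_append, List.count_cons_self,
      List.count_eq_zero.2 (not_mem_Bk a0 k), ih]
    omega

theorem L6 : ∀ (j : ℕ) (v : List α), v.count a0 ≤ j → v.length ≤ k →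
    v <+ Wstar a0 k j := by
  intro j
  induction j with
  | zero =>
    intro v hc hl
    have hv : a0 ∉ v := fun h => by
      rw [Nat.le_zero, List.count_eq_zero] at hc; exact hc h
    have hB : v <+ Bk a0 k := by
      unfold Bk
      apply Lchunks _ hl
      intro x hx
      rw [Finset.mem_toList, Finset.mem_erase]
      exact ⟨fun hxa => hv (hxa ▸ hx), Finset.mem_univ _⟩
    unfold Wstar
    simpa using hB
  | succ j ih =>
    intro v hc hl
    by_cases ha : a0 ∈ v
    · obtain ⟨s, t, rfl, hs⟩ := Lsplit ha
      have hct : t.count a0 ≤ j := by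
        rw [List.count_append, List.count_cons_self] at hc
        rw [List.count_eq_zero_of_not_mem hs] at hc
        omega
      have hsl : s.length ≤ k := by
        have := (List.length_append (as := s) (bs := a0 :: t)) ▸ hl; simp at this ⊢; omega
      have htl : t.length ≤ k := by
        have := (List.length_append (as := s) (bs := a0 :: t)) ▸ hl; simp at this ⊢; omega
      have hsB : s <+ Bk a0 k := by
        unfold Bk
        apply Lchunks _ hsl
        intro x hx
        rw [Finset.mem_toList, Finset.mem_erase]
        exact ⟨fun hxa => hs (hxa ▸ hx), Finset.mem_univ _⟩
      rw [Wstar_succ]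
      exact hsB.append (List.cons_sublist_cons.2 (ih t hct htl))
    · have hsB : v <+ Bk a0 k := by
        unfold Bk
        apply Lchunks _ hl
        intro x hx
        rw [Finset.mem_toList, Finset.mem_erase]
        exact ⟨fun hxa => ha (hxa ▸ hx), Finset.mem_univ _⟩
      rw [Wstar_succ]
      calc v <+ Bk a0 k := hsB
        _ <+ Bk a0 k ++ a0 :: Wstar a0 k j := List.sublist_append_left _ _

theorem archFact_Wstar (hk : 1 ≤ k) (ι : ℕ) :
    IsArchFact Finset.univ (Wstar a0 k ι)
      (List.replicate ι (Bk a0 k)) (List.replicate ι a0) (Bk a0 k) := by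
  refine ⟨by simp, ?_, ?_, ?_, ?_⟩
  · rw [zipWith_replicate']
    rfl
  · intro p hp x _
    have h1 := List.of_mem_zip hp
    rw [List.eq_of_mem_replicate h1.1, List.eq_of_mem_replicate h1.2]
    by_cases hx : x = a0
    · simp [hx]
    · exact List.mem_append_left _ (mem_Bk a0 k hk hx)
  · intro p hp
    have h1 := List.of_mem_zip hp
    rw [List.eq_of_mem_replicate h1.1, List.eq_of_mem_replicate h1.2]
    exact not_mem_Bk a0 k
  · rw [Finset.ssubset_iff_of_subset (Finset.subset_univ _)]
    exact ⟨a0, Finset.mem_univ _, fun h => not_mem_Bk a0 k (List.mem_toFinset.1 h)⟩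

theorem univIdx_Wstar (hk : 1 ≤ k) (ι : ℕ) :
    univIdx Finset.univ (Wstar a0 k ι) = ι := by
  have := L3 (archFact_Wstar a0 k hk ι)
  simpa using this

theorem sublist_Wstar_iff {v : List α} (ι : ℕ) (hv : v.length ≤ k) :
    v <+ Wstar a0 k ι ↔ ¬ (List.replicate (ι+1) a0 <+ v) := by
  constructor
  · intro h hrep
    have h1 : List.replicate (ι+1) a0 <+ Wstar a0 k ι := hrep.trans h
    have h2 : ι + 1 ≤ (Wstar a0 k ι).count a0 :=
      (List.replicate_sublist_iff.symm).2 h1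
    rw [count_Wstar] at h2
    omega
  · intro h
    apply L6 a0 k ι v _ hv
    by_contra hc
    push_neg at hc
    exact h ((List.replicate_sublist_iff.symm).1 hc)
end Wstar

theorem LB {ι : ℕ} {w' : List α} [Nonempty α] (h : univIdx Finset.univ w' = ι) :
    ∃ u : List α, u.length = ι + 1 ∧ ¬ u <+ w' := by
  by_contra hc
  push_neg at hc
  have hmem : (ι + 1) ∈ {n | IsKUniversal Finset.univ n w'} := by
    intro v hv _
    exact hc v hv
  have hbdd : BddAbove {n | IsKUniversal Finset.univ n w'} := by
    refine ⟨w'.length, fun n hn => ?_⟩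
    obtain ⟨c⟩ := ‹Nonempty α›
    have := hn (List.replicate n c) (by simp) (by simp)
    simpa using this.length_le
  have := le_csSup hbdd hmem
  rw [← univIdx, h] at this
  omega

end SF2

theorem stmt2 {α : Type u} [Fintype α] [DecidableEq α]
    (hsigma : 2 ≤ Fintype.card α) (k : ℕ) (w : List α) (halph : ∀ a : α, a ∈ w)
    (hk : univIdx Finset.univ w < k)
    (inners : List (List α)) (modus : List α) (rest : List α)
    (hfact : IsArchFact Finset.univ w inners modus rest) :
    (∀ w' : List α, univIdx Finset.univ w' = univIdx Finset.univ w →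
        (ScatFact k w').ncard ≤ (ScatFact k w).ncard) ↔
    (∃! a : α, ScatFact k w =
        {v : List α | v.length = k ∧
          (modus ++ [a]) ∉ ScatFact (univIdx Finset.univ w + 1) v}) := by
  classical
  haveI hne : Nonempty α := Fintype.card_pos_iff.1 (by omega)
  have hι : univIdx Finset.univ w = modus.length := SF2.L3 hfact
  obtain ⟨hlen, hw, harch, hmod, hrest⟩ := hfact
  obtain ⟨x, -, hx⟩ := Finset.exists_of_ssubset hrest
  have hxr : x ∉ rest := fun h => hx (List.mem_toFinset.2 h)
  have hι1 : 1 ≤ modus.length := by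
    rcases modus with _ | ⟨m, ms⟩
    · exfalso
      have hinn : inners = [] := List.length_eq_zero_iff.1 (by simpa using hlen)
      rw [hinn] at hw
      simp only [List.zipWith_nil_left, List.flatten_nil, List.nil_append] at hw
      exact hxr (hw ▸ halph x)
    · simp
  have hkι : modus.length + 1 ≤ k := by omega
  have habs : ¬ (modus ++ [x]) <+ w := by
    intro h
    rw [hw] at h
    have := SF2.L1' hlen hmod [x] h
    exact hxr (List.singleton_sublist.1 this)
  have hCset : ∀ a : α, {v : List α | v.length = k ∧
      (modus ++ [a]) ∉ ScatFact (univIdx Finset.univ w + 1) v} = ↑(SF2.CFin k (modus ++ [a])) := by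
    intro a
    ext v
    simp only [Set.mem_setOf_eq, Finset.mem_coe]
    constructor
    · rintro ⟨h1, h2⟩
      refine Finset.mem_filter.2 ⟨SF2.mem_allLists.2 h1, fun hs => h2 ⟨?_, hs⟩⟩
      simp [hι]
    · intro hmem
      have h1 := Finset.mem_filter.1 hmem
      exact ⟨SF2.mem_allLists.1 h1.1, fun hsc => h1.2 hsc.2⟩
  constructor
  · intro hmax
    have hwstar := hmax (SF2.Wstar x k modus.length)
      (by rw [SF2.univIdx_Wstar x k (by omega) modus.length]; exact hι.symm)
    have hWscat : ScatFact k (SF2.Wstar x k modus.length)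
        = ↑(SF2.CFin k (List.replicate (modus.length + 1) x)) := by
      ext v
      simp only [ScatFact, Set.mem_setOf_eq, Finset.mem_coe]
      constructor
      · rintro ⟨hvl, hvs⟩
        exact Finset.mem_filter.2 ⟨SF2.mem_allLists.2 hvl,
          (SF2.sublist_Wstar_iff x k _ (le_of_eq hvl)).1 hvs⟩
      · intro hmem
        have h1 := Finset.mem_filter.1 hmem
        have hvl := SF2.mem_allLists.1 h1.1
        exact ⟨hvl, (SF2.sublist_Wstar_iff x k _ (le_of_eq hvl)).2 h1.2⟩
    have hsub : ScatFact k w ⊆ ↑(SF2.CFin k (modus ++ [x])) := by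
      rintro v ⟨hvl, hvs⟩
      exact Finset.mem_coe.2 (Finset.mem_filter.2 ⟨SF2.mem_allLists.2 hvl,
        fun hxx => habs (hxx.trans hvs)⟩)
    have hcard : (↑(SF2.CFin k (modus ++ [x])) : Set (List α)).ncard ≤ (ScatFact k w).ncard := by
      rw [Set.ncard_coe_finset]
      rw [SF2.card_CFin_eq_of_length_eq
        (show (modus ++ [x]).length = (List.replicate (modus.length+1) x).length by simp)]
      calc (SF2.CFin k (List.replicate (modus.length+1) x)).card
          = (ScatFact k (SF2.Wstar x k modus.length)).ncard := by
            rw [hWscat, Set.ncard_coe_finset]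
        _ ≤ (ScatFact k w).ncard := hwstar
    have heq : ScatFact k w = ↑(SF2.CFin k (modus ++ [x])) :=
      Set.eq_of_subset_of_ncard_le hsub hcard (Finset.finite_toSet _)
    refine ⟨x, ?_, ?_⟩
    · rw [heq]; exact (hCset x).symm
    · intro a' hE'
      by_cases hax : a' = x
    
      · exact hax
      exfalso
      set v := (modus ++ [x]) ++ List.replicate (k - (modus.length + 1)) x with hvdef
      have hvlen : v.length = k := by
        rw [hvdef]
        simp only [List.length_append, List.length_replicate, List.length_cons,
          List.length_nil]
        omega
      have hvmem : modus ++ [x] <+ v := List.sublist_append_left _ _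
      have hvnot : v ∉ ScatFact k w := by
        rw [heq]
        intro hmem
        exact (Finset.mem_filter.1 (Finset.mem_coe.1 hmem)).2 hvmem
      rw [hE', hCset a'] at hvnot
      simp only [Finset.mem_coe, SF2.CFin, Finset.mem_filter, SF2.mem_allLists, not_and,
        not_not] at hvnot
      have hv2 : modus ++ [a'] <+ v := hvnot hvlen
      rw [hvdef] at hv2
      have h3 : modus ++ [a'] <+ modus ++ [x] := SF2.LPad hax hv2
      exact SF2.Llast hax h3
  · rintro ⟨a, hE, -⟩
    intro w' hw'
    have heq : ScatFact k w = ↑(SF2.CFin k (modus ++ [a])) := by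
      rw [hE]; exact hCset a
    obtain ⟨u, hul, hu⟩ := SF2.LB (ι := modus.length) (w' := w') (by rw [hw', hι])
    have hsub : ScatFact k w' ⊆ ↑(SF2.CFin k u) := by
      rintro v ⟨hvl, hvs⟩
      exact Finset.mem_coe.2 (Finset.mem_filter.2 ⟨SF2.mem_allLists.2 hvl,
        fun hxx => hu (hxx.trans hvs)⟩)
    calc (ScatFact k w').ncard ≤ (↑(SF2.CFin k u) : Set (List α)).ncard :=
          Set.ncard_le_ncard hsub (Finset.finite_toSet _)
      _ = (SF2.CFin k u).card := Set.ncard_coe_finset _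
      _ = (SF2.CFin k (modus ++ [a])).card :=
          SF2.card_CFin_eq_of_length_eq (by simp [hul])
      _ = (ScatFact k w).ncard := by rw [heq, Set.ncard_coe_finset]
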